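/- Let H : [0,1] × M → ℝ be Lipschitz in t uniformly in x with constant L (‖H_t − H_s‖_{C⁰} ≤ L|t−s|), normalized, and let ζ : [0,1] → [0,1] be C¹ with ‖ζ − id‖_{C⁰} < ε and 0 ≤ ζ' ≤ 2. Then the reparameterization H^ζ(t,x) = ζ'(t)H(ζ(t),x) satisfies, for every t, max_x (H^ζ(t,x) − H(t,x)) ≤ 2Lε + osc(H_t), and hence ‖H^ζ − H‖_∞ ≤ 4Lε + 2‖H‖_∞. -/

import Mathlib

open Set Function MeasureTheory Filter Topology

/-- Let `H` be Lipschitz in `t` uniformly in `x` with constant `L`, normalized, and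
let `ζ : [0,1] → [0,1]` be `C¹` with `‖ζ − id‖_{C⁰} < ε` and `0 ≤ ζ' ≤ 2`. Then the
reparameterization `H^ζ(t,x) = ζ'(t)H(ζ(t),x)` satisfies, for every `t`,
`max_x (H^ζ(t,x) − H(t,x)) ≤ 2Lε + osc(H_t)`, and hence
`‖H^ζ − H‖_∞ ≤ 4Lε + 2‖H‖_∞`. -/
theorem reparam_linfty_estimate
    {M : Type*} [MetricSpace M] [CompactSpace M] [Nonempty M]
    [MeasurableSpace M] [BorelSpace M]
    (μ : Measure M) [IsFiniteMeasure μ] (hμ : μ ≠ 0)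
    (H : ℝ → M → ℝ) (hH : Continuous (Function.uncurry H))
    (L : ℝ)
    (hLip : ∀ t ∈ Set.Icc (0:ℝ) 1, ∀ s ∈ Set.Icc (0:ℝ) 1, ∀ x,
      |H t x - H s x| ≤ L * |t - s|)
    (hnorm : ∀ t ∈ Set.Icc (0:ℝ) 1, ∫ x, H t x ∂μ = 0)
    (ζ : ℝ → ℝ) (hζ : ContDiff ℝ 1 ζ)
    (hmaps : Set.MapsTo ζ (Set.Icc 0 1) (Set.Icc 0 1))
    (ε : ℝ) (hεpos : 0 < ε)
    (hζid : ∀ t ∈ Set.Icc (0:ℝ) 1, |ζ t - t| < ε)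
    (hder : ∀ t ∈ Set.Icc (0:ℝ) 1, deriv ζ t ∈ Set.Icc (0:ℝ) 2) :
    (∀ t ∈ Set.Icc (0:ℝ) 1,
      (⨆ x, (deriv ζ t * H (ζ t) x - H t x))
        ≤ 2 * L * ε + ((⨆ x, H t x) - ⨅ x, H t x)) ∧
    (⨆ t : Set.Icc (0:ℝ) 1,
      ((⨆ x, (deriv ζ (t:ℝ) * H (ζ t) x - H t x))
        - ⨅ x, (deriv ζ (t:ℝ) * H (ζ t) x - H t x)))
      ≤ 4 * L * ε + 2 * ⨆ t : Set.Icc (0:ℝ) 1, ((⨆ x, H t x) - ⨅ x, H t x) := by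
  have hCt : ∀ t : ℝ, Continuous (H t) := fun t => hH.comp (Continuous.prodMk_right t)
  have bddA : ∀ t : ℝ, BddAbove (range (H t)) :=
    fun t => (isCompact_range (hCt t)).bddAbove
  have bddB : ∀ t : ℝ, BddBelow (range (H t)) :=
    fun t => (isCompact_range (hCt t)).bddBelow
  have hL0 : 0 ≤ L := by
    have h := hLip 0 (by norm_num) 1 (by norm_num) Classical.ofNonempty
    have h0 : (0:ℝ) ≤ L * |(0:ℝ) - 1| := le_trans (abs_nonneg _) h
    simpa using h0
  have hμpos : 0 < (μ Set.univ).toReal := by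
    refine ENNReal.toReal_pos ?_ (measure_ne_top μ _)
    simpa [Measure.measure_univ_eq_zero] using hμ
  have hint : ∀ t : ℝ, Integrable (H t) μ :=
    fun t => (hCt t).integrable_of_hasCompactSupport
      (isCompact_univ.of_isClosed_subset (isClosed_tsupport _) (subset_univ _))
  -- the sup is nonneg and the inf is nonpos, by normalization
  have hinf0 : ∀ t ∈ Set.Icc (0:ℝ) 1, (⨅ x, H t x) ≤ 0 := by
    intro t ht
    by_contra hc
    push_neg at hc
    have hle : ∀ x, (⨅ x, H t x) ≤ H t x := fun x => ciInf_le (bddB t) x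
    have : (⨅ x, H t x) * (μ Set.univ).toReal ≤ ∫ x, H t x ∂μ := by
      have := integral_mono (integrable_const (⨅ x, H t x)) (hint t) hle
      simpa [integral_const, smul_eq_mul, mul_comm, Measure.real] using this
    rw [hnorm t ht] at this
    nlinarith
  have hsup0 : ∀ t ∈ Set.Icc (0:ℝ) 1, 0 ≤ (⨆ x, H t x) := by
    intro t ht
    by_contra hc
    push_neg at hc
    have hle : ∀ x, H t x ≤ (⨆ x, H t x) := fun x => le_ciSup (bddA t) x
    have : ∫ x, H t x ∂μ ≤ (⨆ x, H t x) * (μ Set.univ).toReal := by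
      have := integral_mono (hint t) (integrable_const (⨆ x, H t x)) hle
      simpa [integral_const, smul_eq_mul, mul_comm, Measure.real] using this
    rw [hnorm t ht] at this
    nlinarith
  -- the key pointwise bound
  have key : ∀ t ∈ Set.Icc (0:ℝ) 1, ∀ x,
      |deriv ζ t * H (ζ t) x - H t x|
        ≤ 2 * L * ε + ((⨆ x, H t x) - ⨅ x, H t x) := by
    intro t ht x
    obtain ⟨ha0, ha2⟩ := hder t ht
    have hζt := hmaps ht
    have h1 : |H (ζ t) x - H t x| ≤ L * ε := by
      refine le_trans (hLip (ζ t) hζt t ht x) ?_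
      have h2 := (hζid t ht).le
      have h3 := abs_nonneg (ζ t - t)
      nlinarith
    have hA : |deriv ζ t * (H (ζ t) x - H t x)| ≤ 2 * (L * ε) := by
      rw [abs_mul]
      have h2 : |deriv ζ t| ≤ 2 := by rw [abs_of_nonneg ha0]; exact ha2
      exact mul_le_mul h2 h1 (abs_nonneg _) (by norm_num)
    have hsub : H t x ≤ ⨆ x, H t x := le_ciSup (bddA t) x
    have hsub' : (⨅ x, H t x) ≤ H t x := ciInf_le (bddB t) x
    have hs0 := hsup0 t ht
    have hi0 := hinf0 t ht
    have hB : |(deriv ζ t - 1) * H t x| ≤ (⨆ x, H t x) - ⨅ x, H t x := by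
      rw [abs_mul]
      have h2 : |deriv ζ t - 1| ≤ 1 := abs_le.mpr ⟨by linarith, by linarith⟩
      have h3 : |H t x| ≤ (⨆ x, H t x) - ⨅ x, H t x :=
        abs_le.mpr ⟨by linarith, by linarith⟩
      calc |deriv ζ t - 1| * |H t x| ≤ 1 * ((⨆ x, H t x) - ⨅ x, H t x) :=
            mul_le_mul h2 h3 (abs_nonneg _) (by norm_num)
        _ = (⨆ x, H t x) - ⨅ x, H t x := one_mul _
    have heq : deriv ζ t * H (ζ t) x - H t x
        = deriv ζ t * (H (ζ t) x - H t x) + (deriv ζ t - 1) * H t x := by ring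
    rw [heq]
    calc |deriv ζ t * (H (ζ t) x - H t x) + (deriv ζ t - 1) * H t x|
        ≤ |deriv ζ t * (H (ζ t) x - H t x)| + |(deriv ζ t - 1) * H t x| := abs_add_le _ _
      _ ≤ 2 * L * ε + ((⨆ x, H t x) - ⨅ x, H t x) := by linarith
  have part1 : ∀ t ∈ Set.Icc (0:ℝ) 1,
      (⨆ x, (deriv ζ t * H (ζ t) x - H t x))
        ≤ 2 * L * ε + ((⨆ x, H t x) - ⨅ x, H t x) := by
    intro t ht
    exact ciSup_le fun x => le_trans (le_abs_self _) (key t ht x)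
  refine ⟨part1, ?_⟩
  -- global bound on H over the square, to bound the oscillation family
  obtain ⟨C, hC⟩ := (isCompact_Icc.prod isCompact_univ).exists_bound_of_continuousOn
    (hH.continuousOn (s := Set.Icc (0:ℝ) 1 ×ˢ Set.univ))
  have hCb : ∀ t ∈ Set.Icc (0:ℝ) 1, ∀ x : M, |H t x| ≤ C := by
    intro t ht x
    simpa [Function.uncurry] using hC (t, x) ⟨ht, mem_univ x⟩
  have hOscBdd : BddAbove (range fun t : Set.Icc (0:ℝ) 1 =>
      ((⨆ x, H (t:ℝ) x) - ⨅ x, H (t:ℝ) x)) := by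
    refine ⟨2 * C, ?_⟩
    rintro y ⟨t, rfl⟩
    have h1 : (⨆ x, H (t:ℝ) x) ≤ C :=
      ciSup_le fun x => le_trans (le_abs_self _) (hCb t t.2 x)
    have h2 : -C ≤ (⨅ x, H (t:ℝ) x) :=
      le_ciInf fun x => le_trans (neg_le_neg (hCb t t.2 x)) (neg_abs_le _)
    simp only
    linarith
  haveI : Nonempty (Set.Icc (0:ℝ) 1) := ⟨⟨0, by norm_num⟩⟩
  refine ciSup_le fun t => ?_
  have hK : Continuous fun x => deriv ζ (t:ℝ) * H (ζ t) x - H (t:ℝ) x :=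
    (continuous_const.mul (hCt (ζ t))).sub (hCt t)
  have hsupK : (⨆ x, (deriv ζ (t:ℝ) * H (ζ t) x - H (t:ℝ) x))
      ≤ 2 * L * ε + ((⨆ x, H (t:ℝ) x) - ⨅ x, H (t:ℝ) x) := part1 t t.2
  have hinfK : -(2 * L * ε + ((⨆ x, H (t:ℝ) x) - ⨅ x, H (t:ℝ) x))
      ≤ (⨅ x, (deriv ζ (t:ℝ) * H (ζ t) x - H (t:ℝ) x)) :=
    le_ciInf fun x => neg_le_of_neg_le (by
      have := (abs_le.mp (key t t.2 x)).1
      linarith)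
  have hosc : ((⨆ x, H (t:ℝ) x) - ⨅ x, H (t:ℝ) x)
      ≤ ⨆ t : Set.Icc (0:ℝ) 1, ((⨆ x, H (t:ℝ) x) - ⨅ x, H (t:ℝ) x) :=
    le_ciSup hOscBdd t
  linarith
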